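/- Consider the optimal transport conditional probability path q_t(x|x₁) = N(x | t x₁, σ_t² I) with σ_t = 1 − (1 − σ_min) t, and conditional vector field u_t(x|x₁) = (x₁ − (1 − σ_min)x) / (1 − (1 − σ_min)t). Then u_t(x|x₁) = x/t + (σ_t/t) ∇_x log q_t(x|x₁), and hence the marginal vector field u_t(x) = ∫ u_t(x|x₁) q_t(x|x₁)π(x₁)/q_t(x) dx₁ equals x/t + (σ_t/t) ∇_x log q_t(x), which is a gradient field: u_t(x) = ∇_x (‖x‖²/(2t) + (σ_t/t) log q_t(x)). -/

import Mathlib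

open MeasureTheory

section helpers

variable {d : ℕ}

local notation "E" => EuclideanSpace ℝ (Fin d)

lemma hasGradientAt_of_inner {f : E → ℝ} {L : E →L[ℝ] ℝ} {g x : E}
    (h : HasFDerivAt f L x) (hg : ∀ y, L y = inner ℝ g y) : HasGradientAt f g x := by
  have hL : InnerProductSpace.toDual ℝ E g = L :=
    ContinuousLinearMap.ext fun y => by rw [InnerProductSpace.toDual_apply_apply, hg]
  rw [hasGradientAt_iff_hasFDerivAt, hL]
  exact h

lemma quad_hasFDerivAt (s : ℝ) (a x : E) :
    HasFDerivAt (fun y : E => -‖y - a‖ ^ 2 / (2 * s))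
      ((-(2 * s)⁻¹) • (2 • (innerSL ℝ (x - a)))) x := by
  have h1 : HasFDerivAt (fun y : E => ‖y - a‖ ^ 2)
      (2 • (innerSL ℝ (x - a))) x := by
    simpa using ((hasFDerivAt_id x).sub_const a).norm_sq
  have heq : (fun y : E => -‖y - a‖ ^ 2 / (2 * s))
      = fun y : E => (-(2 * s)⁻¹) * ‖y - a‖ ^ 2 := by
    funext y; ring
  rw [heq]
  exact h1.const_mul _

lemma quad_hasGradientAt (s : ℝ) (hs : s ≠ 0) (a x : E) :
    HasGradientAt (fun y : E => -‖y - a‖ ^ 2 / (2 * s)) ((-s⁻¹) • (x - a)) x := by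
  refine hasGradientAt_of_inner (quad_hasFDerivAt s a x) fun y => ?_
  rw [real_inner_smul_left]
  simp only [ContinuousLinearMap.smul_apply, innerSL_apply_apply, smul_eq_mul, nsmul_eq_mul,
    Nat.cast_ofNat]
  field_simp

lemma gauss_hasFDerivAt (C s : ℝ) (hs : s ≠ 0) (a x : E) :
    HasFDerivAt (fun y : E => C * Real.exp (-‖y - a‖ ^ 2 / (2 * s)))
      (((C * Real.exp (-‖x - a‖ ^ 2 / (2 * s))) * -s⁻¹) • (innerSL ℝ (x - a))) x := by
  have h2 := quad_hasFDerivAt s a x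
  have h3 := (Real.hasDerivAt_exp (-‖x - a‖ ^ 2 / (2 * s))).comp_hasFDerivAt x h2
  have h4 := h3.const_mul C
  refine h4.congr_fderiv ?_
  ext y
  simp only [ContinuousLinearMap.smul_apply, innerSL_apply_apply, smul_eq_mul, nsmul_eq_mul,
    Nat.cast_ofNat]
  field_simp

lemma gauss_hasGradientAt (C s : ℝ) (hs : s ≠ 0) (a x : E) :
    HasGradientAt (fun y : E => C * Real.exp (-‖y - a‖ ^ 2 / (2 * s)))
      (((C * Real.exp (-‖x - a‖ ^ 2 / (2 * s))) * -s⁻¹) • (x - a)) x := by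
  refine hasGradientAt_of_inner (gauss_hasFDerivAt C s hs a x) fun y => ?_
  rw [real_inner_smul_left]
  simp only [ContinuousLinearMap.smul_apply, innerSL_apply_apply, smul_eq_mul]

lemma rexp_bound (s r : ℝ) (hs : 0 < s) (hr : 0 ≤ r) :
    r * Real.exp (-r ^ 2 / (2 * s)) ≤ Real.sqrt (2 * s) := by
  set c := Real.sqrt (2 * s) with hc
  have hc2 : c ^ 2 = 2 * s := Real.sq_sqrt (by positivity)
  have hcpos : 0 < c := Real.sqrt_pos.2 (by positivity)
  rcases le_total r c with h | h
  · have hle : Real.exp (-r ^ 2 / (2 * s)) ≤ 1 :=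
      Real.exp_le_one_iff.2 (div_nonpos_of_nonpos_of_nonneg (by nlinarith) (by positivity))
    nlinarith
  · have hE : r ^ 2 / (2 * s) ≤ Real.exp (r ^ 2 / (2 * s)) :=
      (Real.add_one_le_exp _).trans' (by nlinarith [sq_nonneg r])
    have hEpos := Real.exp_pos (r ^ 2 / (2 * s))
    rw [show -r ^ 2 / (2 * s) = -(r ^ 2 / (2 * s)) by ring, Real.exp_neg,
      mul_inv_le_iff₀ hEpos]
    have h1 : c * (r ^ 2 / (2 * s)) ≤ c * Real.exp (r ^ 2 / (2 * s)) :=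
      mul_le_mul_of_nonneg_left hE hcpos.le
    have h2 : c * (r ^ 2 / (2 * s)) = r ^ 2 / c := by
      rw [← hc2]; field_simp
    have h3 : r ≤ r ^ 2 / c := by
      rw [le_div_iff₀ hcpos]; nlinarith
    linarith

end helpers

set_option maxHeartbeats 1000000 in
set_option synthInstance.maxHeartbeats 400000 in
theorem stmt_8
    {d : ℕ}
    (t σmin : ℝ) (ht : t ∈ Set.Ioo (0 : ℝ) 1) (hσmin : σmin ∈ Set.Ioo (0 : ℝ) 1)
    (σt : ℝ) (hσt : σt = 1 - (1 - σmin) * t)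
    (ρ : Measure (EuclideanSpace ℝ (Fin d))) [IsProbabilityMeasure ρ]
    (qc : EuclideanSpace ℝ (Fin d) → EuclideanSpace ℝ (Fin d) → ℝ)
    (hqc : ∀ x x1, qc x x1 =
      (2 * Real.pi * σt ^ 2) ^ (-(d : ℝ) / 2) * Real.exp (-‖x - t • x1‖ ^ 2 / (2 * σt ^ 2)))
    (uc : EuclideanSpace ℝ (Fin d) → EuclideanSpace ℝ (Fin d) → EuclideanSpace ℝ (Fin d))
    (huc : ∀ x x1, uc x x1 = (1 - (1 - σmin) * t)⁻¹ • (x1 - (1 - σmin) • x))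
    (q : EuclideanSpace ℝ (Fin d) → ℝ) (hq : ∀ x, q x = ∫ x1, qc x x1 ∂ρ)
    (hq_pos : ∀ x, 0 < q x)
    -- differentiation under the integral sign is justified
    (hswap : ∀ x, gradient q x = ∫ x1, gradient (fun y => qc y x1) x ∂ρ)
    (u : EuclideanSpace ℝ (Fin d) → EuclideanSpace ℝ (Fin d))
    (hu : ∀ x, u x = ∫ x1, (qc x x1 / q x) • uc x x1 ∂ρ)
    (hint : ∀ x, Integrable (fun x1 => (qc x x1 / q x) • uc x x1) ρ) :
    (∀ x x1, uc x x1
        = t⁻¹ • x + (σt / t) • gradient (fun y => Real.log (qc y x1)) x)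
    ∧ (∀ x, u x = t⁻¹ • x + (σt / t) • gradient (fun y => Real.log (q y)) x)
    ∧ (∀ x, u x
        = gradient (fun y => ‖y‖ ^ 2 / (2 * t) + (σt / t) * Real.log (q y)) x) := by
  obtain ⟨ht0, ht1⟩ := ht
  obtain ⟨hm0, hm1⟩ := hσmin
  have hσt0 : 0 < σt := by rw [hσt]; nlinarith
  have hσtne : σt ≠ 0 := hσt0.ne'
  have htne : t ≠ 0 := ht0.ne'
  subst hσt
  set σt : ℝ := 1 - (1 - σmin) * t with hσt
  set C : ℝ := (2 * Real.pi * σt ^ 2) ^ (-(d : ℝ) / 2) with hCdef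
  have hCpos : 0 < C := Real.rpow_pos_of_pos (by positivity) _
  have hspos : (0 : ℝ) < σt ^ 2 := by positivity
  have hs : (σt ^ 2 : ℝ) ≠ 0 := hspos.ne'
  have hqc_fun : ∀ x1 : EuclideanSpace ℝ (Fin d), (fun y => qc y x1)
      = fun y => C * Real.exp (-‖y - t • x1‖ ^ 2 / (2 * σt ^ 2)) :=
    fun x1 => funext fun y => hqc y x1
  have hqc_pos : ∀ y x1, 0 < qc y x1 := fun y x1 => by
    rw [hqc]; positivity
  -- gradient of qc in the first variable
  have hqc_grad : ∀ (x x1 : EuclideanSpace ℝ (Fin d)),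
      HasGradientAt (fun y => qc y x1) ((qc x x1 * -(σt ^ 2)⁻¹) • (x - t • x1)) x := by
    intro x x1
    rw [hqc_fun x1, hqc x x1]
    exact gauss_hasGradientAt C (σt ^ 2) hs _ x
  have hqc_grad_eq : ∀ (x x1 : EuclideanSpace ℝ (Fin d)),
      gradient (fun y => qc y x1) x = (qc x x1 * -(σt ^ 2)⁻¹) • (x - t • x1) :=
    fun x x1 => (hqc_grad x x1).gradient
  -- gradient of log qc in the first variable
  have hlogqc_grad : ∀ (x x1 : EuclideanSpace ℝ (Fin d)),
      HasGradientAt (fun y => Real.log (qc y x1)) ((-(σt ^ 2)⁻¹) • (x - t • x1)) x := by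
    intro x x1
    have heq : (fun y => Real.log (qc y x1))
        = fun y => Real.log C + -‖y - t • x1‖ ^ 2 / (2 * σt ^ 2) := by
      funext y
      rw [hqc, Real.log_mul hCpos.ne' (Real.exp_ne_zero _), Real.log_exp]
    rw [heq]
    exact hasGradientAt_iff_hasFDerivAt.2
      ((quad_hasGradientAt (σt ^ 2) hs (t • x1) x).hasFDerivAt.const_add (Real.log C))
  -- PART 1
  have part1 : ∀ x x1, uc x x1
      = t⁻¹ • x + (σt / t) • gradient (fun y => Real.log (qc y x1)) x := by
    intro x x1
    rw [(hlogqc_grad x x1).gradient, huc]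
    match_scalars
    · field_simp
    · field_simp
      rw [hσt]; ring
  -- measurability / integrability facts
  have hqc_cont : ∀ y : EuclideanSpace ℝ (Fin d), Continuous (fun x1 => qc y x1) := by
    intro y
    have heq : (fun x1 => qc y x1)
        = fun x1 : EuclideanSpace ℝ (Fin d) =>
          C * Real.exp (-‖y - t • x1‖ ^ 2 / (2 * σt ^ 2)) :=
      funext fun x1 => hqc y x1
    rw [heq]
    fun_prop
  have hqc_le : ∀ y x1, qc y x1 ≤ C := by
    intro y x1
    rw [hqc]
    calc C * Real.exp (-‖y - t • x1‖ ^ 2 / (2 * σt ^ 2)) ≤ C * 1 := by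
          gcongr
          exact Real.exp_le_one_iff.2
            (div_nonpos_of_nonpos_of_nonneg (neg_nonpos.2 (by positivity)) (by positivity))
      _ = C := mul_one C
  have hqc_int : ∀ y : EuclideanSpace ℝ (Fin d), Integrable (fun x1 => qc y x1) ρ := by
    intro y
    refine Integrable.mono' (integrable_const C) (hqc_cont y).aestronglyMeasurable
      (Filter.Eventually.of_forall fun x1 => ?_)
    rw [Real.norm_eq_abs, abs_of_pos (hqc_pos y x1)]
    exact hqc_le y x1
  -- fderiv of qc in the first variable, as a CLM
  have hqc_fderiv : ∀ (y x1 : EuclideanSpace ℝ (Fin d)), HasFDerivAt (fun z => qc z x1)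
      ((qc y x1 * -(σt ^ 2)⁻¹) • (innerSL ℝ (y - t • x1))) y := by
    intro y x1
    rw [hqc_fun x1, hqc y x1]
    exact gauss_hasFDerivAt C (σt ^ 2) hs _ y
  -- differentiability of q, by dominated convergence
  have hq_diff : ∀ x : EuclideanSpace ℝ (Fin d), DifferentiableAt ℝ q x := by
    intro x
    have hqfun : q = fun y => ∫ x1, qc y x1 ∂ρ := funext hq
    rw [hqfun]
    refine (hasFDerivAt_integral_of_dominated_of_fderiv_le (s := Metric.ball x 1)
      (F' := fun y x1 => (qc y x1 * -(σt ^ 2)⁻¹) • (innerSL ℝ (y - t • x1)))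
      (bound := fun _ => C * (σt ^ 2)⁻¹ * Real.sqrt (2 * σt ^ 2))
      (Metric.ball_mem_nhds x one_pos)
      (Filter.Eventually.of_forall fun y => (hqc_cont y).aestronglyMeasurable)
      (hqc_int x)
      ?_ ?_ (integrable_const _)
      (Filter.Eventually.of_forall fun x1 y _ => hqc_fderiv y x1)).differentiableAt
    · apply Continuous.aestronglyMeasurable
      exact ((hqc_cont x).mul continuous_const).smul
        ((innerSL ℝ).continuous.comp (continuous_const.sub (continuous_const_smul t)))
    · refine Filter.Eventually.of_forall fun x1 y _ => ?_
      show ‖(qc y x1 * -(σt ^ 2)⁻¹) • (innerSL ℝ (y - t • x1))‖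
          ≤ C * (σt ^ 2)⁻¹ * Real.sqrt (2 * σt ^ 2)
      rw [norm_smul (qc y x1 * -(σt ^ 2)⁻¹) (innerSL ℝ (y - t • x1)), innerSL_apply_norm, Real.norm_eq_abs, abs_mul,
        abs_of_pos (hqc_pos y x1), abs_neg, abs_of_pos (inv_pos.2 hspos), hqc y x1]
      calc C * Real.exp (-‖y - t • x1‖ ^ 2 / (2 * σt ^ 2)) * (σt ^ 2)⁻¹ * ‖y - t • x1‖
          = C * (σt ^ 2)⁻¹ * (‖y - t • x1‖ * Real.exp (-‖y - t • x1‖ ^ 2 / (2 * σt ^ 2))) := by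
            ring
        _ ≤ C * (σt ^ 2)⁻¹ * Real.sqrt (2 * σt ^ 2) := by
            gcongr
            exact rexp_bound (σt ^ 2) _ hspos (norm_nonneg _)
  -- gradient of log q
  have hlogq_grad : ∀ x, HasGradientAt (fun y => Real.log (q y))
      ((q x)⁻¹ • gradient q x) x := by
    intro x
    have h1 : HasGradientAt q (gradient q x) x := (hq_diff x).hasGradientAt
    have h2 := (Real.hasDerivAt_log (hq_pos x).ne').comp_hasFDerivAt x h1.hasFDerivAt
    refine hasGradientAt_of_inner h2 fun y => ?_
    rw [real_inner_smul_left, ContinuousLinearMap.smul_apply, smul_eq_mul,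
      InnerProductSpace.toDual_apply_apply]
  -- PART 2 (core form)
  have part2core : ∀ x, u x = t⁻¹ • x + ((σt / t) * (q x)⁻¹) • gradient q x := by
    intro x
    have hqxne : q x ≠ 0 := (hq_pos x).ne'
    have hpt : ∀ x1, (qc x x1 / q x) • uc x x1
        = ((q x)⁻¹ * t⁻¹ * qc x x1) • x
          + ((σt / t) * (q x)⁻¹) • gradient (fun y => qc y x1) x := by
      intro x1
      rw [hqc_grad_eq x x1, huc]
      match_scalars
      · field_simp
      · field_simp
        rw [hσt]; ring
    have hA : Integrable (fun x1 => ((q x)⁻¹ * t⁻¹ * qc x x1) • x) ρ :=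
      (((hqc_int x).const_mul _).smul_const x)
    have hAB : Integrable (fun x1 => ((q x)⁻¹ * t⁻¹ * qc x x1) • x
        + ((σt / t) * (q x)⁻¹) • gradient (fun y => qc y x1) x) ρ := by
      rw [show (fun x1 => ((q x)⁻¹ * t⁻¹ * qc x x1) • x
          + ((σt / t) * (q x)⁻¹) • gradient (fun y => qc y x1) x)
          = fun x1 => (qc x x1 / q x) • uc x x1 from funext fun x1 => (hpt x1).symm]
      exact hint x
    have hB : Integrable (fun x1 =>
        ((σt / t) * (q x)⁻¹) • gradient (fun y => qc y x1) x) ρ := by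
      have h' := hAB.sub hA
      refine h'.congr (Filter.Eventually.of_forall fun x1 => ?_)
      simp
    have hcoef : (q x)⁻¹ * t⁻¹ * q x = t⁻¹ := by field_simp
    calc u x = ∫ x1, (qc x x1 / q x) • uc x x1 ∂ρ := hu x
      _ = ∫ x1, (((q x)⁻¹ * t⁻¹ * qc x x1) • x
            + ((σt / t) * (q x)⁻¹) • gradient (fun y => qc y x1) x) ∂ρ := by
          congr 1
          exact funext fun x1 => hpt x1
      _ = (∫ x1, (q x)⁻¹ * t⁻¹ * qc x x1 ∂ρ) • x
            + ((σt / t) * (q x)⁻¹) • ∫ x1, gradient (fun y => qc y x1) x ∂ρ := by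
          rw [integral_add hA hB, integral_smul_const, integral_smul]
      _ = t⁻¹ • x + ((σt / t) * (q x)⁻¹) • gradient q x := by
          rw [← hswap x, integral_const_mul, ← hq x, hcoef]
  -- PART 2
  have part2 : ∀ x, u x = t⁻¹ • x + (σt / t) • gradient (fun y => Real.log (q y)) x := by
    intro x
    rw [part2core x, (hlogq_grad x).gradient, smul_smul]
  refine ⟨part1, part2, ?_⟩
  -- PART 3
  intro x
  have h_a : HasFDerivAt (fun y : EuclideanSpace ℝ (Fin d) => ‖y‖ ^ 2 / (2 * t))
      ((2 * t)⁻¹ • (2 • (innerSL ℝ x))) x := by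
    have h1 : HasFDerivAt (fun y : EuclideanSpace ℝ (Fin d) => ‖y‖ ^ 2)
        (2 • (innerSL ℝ x)) x := by
      simpa using (hasFDerivAt_id x).norm_sq
    have heq : (fun y : EuclideanSpace ℝ (Fin d) => ‖y‖ ^ 2 / (2 * t))
        = fun y => (2 * t)⁻¹ * ‖y‖ ^ 2 := by funext y; ring
    rw [heq]
    exact h1.const_mul _
  have h_b := (hlogq_grad x).hasFDerivAt.const_mul (σt / t)
  have hg : HasGradientAt
      (fun y => ‖y‖ ^ 2 / (2 * t) + (σt / t) * Real.log (q y))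
      (t⁻¹ • x + ((σt / t) * (q x)⁻¹) • gradient q x) x := by
    refine hasGradientAt_of_inner (h_a.add h_b) fun y => ?_
    simp only [ContinuousLinearMap.add_apply, ContinuousLinearMap.smul_apply,
      innerSL_apply_apply, smul_eq_mul, nsmul_eq_mul, Nat.cast_ofNat,
      InnerProductSpace.toDual_apply_apply, inner_add_left, real_inner_smul_left]
    field_simp
  rw [hg.gradient, part2core x]
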